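/- A language L is reversible and regular if and only if L is recognised by a finite monoid with involution, i.e., there is a morphism of involution monoids h : (A*, ·, r) → (M, ·, ⋆) with M finite and a subset P ⊆ M with P⋆ = P and L = h^{-1}(P). -/

import Mathlib

def revLang {A : Type*} (L : Set (List A)) : Set (List A) :=
  (fun w => w.reverse) '' L

def Reversible {A : Type*} (L : Set (List A)) : Prop :=
  revLang L = L

theorem reversible_regular_iff_star_monoid {A : Type*} (L : Set (List A)) :
    (Reversible L ∧ Language.IsRegular (L : Language A)) ↔
    (∃ (M : Type) (_ : Monoid M) (_ : Fintype M) (star : M → M) (h : List A → M)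
        (P : Set M),
      (∀ a : M, star (star a) = a) ∧
      (∀ a b : M, star (a * b) = star b * star a) ∧
      h [] = 1 ∧
      (∀ x y : List A, h (x ++ y) = h x * h y) ∧
      (∀ x : List A, h x.reverse = star (h x)) ∧
      star '' P = P ∧
      L = h ⁻¹' P) := by
  constructor
  · rintro ⟨hrev, σ, _, D, hD⟩
    classical
    -- membership form of reversibility
    have hmem : ∀ w : List A, w ∈ L ↔ w.reverse ∈ L := by
      intro w
      constructor
      · intro hw
        rw [← hrev]; exact ⟨w, hw, rfl⟩
      · intro hw
        rw [← hrev] at hw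
        obtain ⟨v, hv, hvw⟩ := hw
        have : v = w := by
          have := congrArg List.reverse hvw
          simpa using this
        rwa [← this]
    -- transition monoid
    let N := (Function.End σ)ᵐᵒᵖ
    let tE : List A → Function.End σ := fun w s => D.evalFrom s w
    have tE_mul : ∀ x y, tE (x ++ y) = tE y * tE x := by
      intro x y
      funext s
      exact D.evalFrom_of_append s x y
    let t : List A → N := fun w => MulOpposite.op (tE w)
    have t_one : t [] = 1 := rfl
    haveI : Fintype (Function.End σ) := Pi.instFintype
    haveI : Fintype N := Fintype.ofEquiv _ MulOpposite.opEquiv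
    haveI : Fintype Nᵐᵒᵖ := Fintype.ofEquiv _ MulOpposite.opEquiv
    have t_mul : ∀ x y, t (x ++ y) = t x * t y := by
      intro x y
      show MulOpposite.op (tE (x ++ y)) = MulOpposite.op (tE x) * MulOpposite.op (tE y)
      rw [← MulOpposite.op_mul, tE_mul]
    have t_mem : ∀ w, w ∈ L ↔ (t w).unop D.start ∈ D.accept := by
      intro w
      rw [← hD]
      rfl
    refine ⟨N × Nᵐᵒᵖ, inferInstance, inferInstance,
      fun p => (p.2.unop, MulOpposite.op p.1),
      fun w => (t w, MulOpposite.op (t w.reverse)),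
      {p | (p.1).unop D.start ∈ D.accept ∧ (p.2.unop).unop D.start ∈ D.accept},
      ?_, ?_, ?_, ?_, ?_, ?_, ?_⟩
    · intro a; rfl
    · intro a b; simp
    · simp [t_one]
    · intro x y
      have : (x ++ y).reverse = y.reverse ++ x.reverse := by simp
      simp [this, t_mul, Prod.ext_iff]
    · intro x; simp
    · ext p
      constructor
      · rintro ⟨q, ⟨hq1, hq2⟩, rfl⟩
        exact ⟨hq2, hq1⟩
      · rintro ⟨h1, h2⟩
        exact ⟨((p.2).unop, MulOpposite.op p.1), ⟨h2, h1⟩, rfl⟩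
    · ext w
      simp only [Set.mem_preimage, Set.mem_setOf_eq, MulOpposite.unop_op]
      rw [← t_mem, ← t_mem, ← hmem]
      tauto
  · rintro ⟨M, _, _, star, h, P, hss, hsmul, h1, hmul, hrev, hP, hL⟩
    have hfold : ∀ (w : List A) (m : M),
        List.foldl (fun m a => m * h [a]) m w = m * h w := by
      intro w
      induction w with
      | nil => intro m; simp [h1]
      | cons a w ih =>
        intro m
        have : h (a :: w) = h [a] * h w := hmul [a] w
        simp [ih, this, mul_assoc]
    have key : ∀ m ∈ P, star m ∈ P := by
      intro m hm
      rw [← hP]; exact ⟨m, hm, rfl⟩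
    constructor
    · -- reversible
      ext w
      constructor
      · rintro ⟨v, hv, rfl⟩
        rw [hL] at hv ⊢
        simp only [Set.mem_preimage] at hv ⊢
        rw [hrev]
        exact key _ hv
      · intro hw
        refine ⟨w.reverse, ?_, by simp⟩
        rw [hL] at hw ⊢
        simp only [Set.mem_preimage] at hw ⊢
        rw [hrev]
        exact key _ hw
    · -- regular
      refine ⟨M, ‹Fintype M›, ⟨fun m a => m * h [a], 1, P⟩, ?_⟩
      ext w
      rw [DFA.mem_accepts]
      show List.foldl _ 1 w ∈ P ↔ _
      rw [hfold, one_mul, hL]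
      rfl
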